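/- Define P_n(z) over ℚ by P_1(z) = 1 and 2z P_n'(z) = n(n-1) P_n(z) + \sum_{i=1}^{n-1} i(n-i)\binom{n}{i} P_i(z) P_{n-i}(z) for n ≥ 2, with P_n(1) = 0 for n ≥ 2. Then each P_n is a polynomial, and \sum_{n≥1} P_n(z) y^n/n! = log(\sum_{n≥0} y^n z^{n(n-1)/2}/n!) as formal power series in y over ℚ[z, z^{-1}] (equivalently, as an identity of exponential generating functions). -/

import Mathlib

open Polynomial

/-- The differential recursion defining the polynomials `P_n`. -/
def PRec (P : ℕ → Polynomial ℚ) : Prop :=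
  P 1 = 1 ∧
  (∀ n : ℕ, 2 ≤ n →
    2 * (Polynomial.X * Polynomial.derivative (P n)) =
      ((n * (n - 1) : ℕ) : ℚ) • P n +
        ∑ i ∈ Finset.Icc 1 (n - 1),
          ((i * (n - i) * n.choose i : ℕ) : ℚ) • (P i * P (n - i))) ∧
  (∀ n : ℕ, 2 ≤ n → (P n).eval 1 = 0)

/-- The formal logarithm of a power series with constant coefficient `1`
(coefficients over `Polynomial ℚ`), given coefficientwise by the usual
log series `∑_{m ≥ 1} (-1)^(m+1) (G-1)^m / m`. -/
noncomputable def flog (G : PowerSeries (Polynomial ℚ)) : PowerSeries (Polynomial ℚ) :=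
  PowerSeries.mk fun n =>
    ∑ m ∈ Finset.Icc 1 n, ((-1 : ℚ) ^ (m + 1) / m) • PowerSeries.coeff n ((G - 1) ^ m)

open PowerSeries Finset

noncomputable section

/-- coefficientwise z-derivative -/
def Dz (A : PowerSeries (Polynomial ℚ)) : PowerSeries (Polynomial ℚ) :=
  PowerSeries.mk fun n => Polynomial.derivative (PowerSeries.coeff n A)

/-- Euler operator y d/dy -/
def Th {S : Type*} [CommSemiring S] (A : PowerSeries S) : PowerSeries S :=
  PowerSeries.mk fun n => n • PowerSeries.coeff n A

@[simp] lemma coeff_Dz (A : PowerSeries (Polynomial ℚ)) (n : ℕ) :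
    PowerSeries.coeff n (Dz A) = Polynomial.derivative (PowerSeries.coeff n A) := by
  simp [Dz]

@[simp] lemma coeff_Th {S : Type*} [CommSemiring S] (A : PowerSeries S) (n : ℕ) :
    PowerSeries.coeff n (Th A) = n • PowerSeries.coeff n A := by
  simp [Th]

lemma Dz_add (A B : PowerSeries (Polynomial ℚ)) : Dz (A + B) = Dz A + Dz B := by
  ext n; simp

lemma Dz_smul (q : ℚ) (A : PowerSeries (Polynomial ℚ)) : Dz (q • A) = q • Dz A := by
  ext n; simp

lemma Th_add {S : Type*} [CommSemiring S] (A B : PowerSeries S) : Th (A + B) = Th A + Th B := by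
  ext n; simp [smul_add]

lemma Th_smul {S : Type*} [CommSemiring S] (q : S) (A : PowerSeries S) :
    Th ((PowerSeries.C q) * A) = (PowerSeries.C q) * Th A := by
  ext n; simp [mul_left_comm]

lemma Th_smul' (q : ℚ) (A : PowerSeries (Polynomial ℚ)) : Th (q • A) = q • Th A := by
  ext n; simp [smul_comm]

lemma Dz_mul (A B : PowerSeries (Polynomial ℚ)) : Dz (A * B) = Dz A * B + A * Dz B := by
  refine PowerSeries.ext fun n => ?_
  simp only [Dz, map_add, PowerSeries.coeff_mul, PowerSeries.coeff_mk]
  rw [Polynomial.derivative_sum, ← Finset.sum_add_distrib]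
  exact Finset.sum_congr rfl fun p hp => by simp [Polynomial.derivative_mul]

lemma Th_mul {S : Type*} [CommSemiring S] (A B : PowerSeries S) :
    Th (A * B) = Th A * B + A * Th B := by
  ext n
  simp only [coeff_Th, map_add, PowerSeries.coeff_mul, Finset.smul_sum,
    ← Finset.sum_add_distrib]
  refine Finset.sum_congr rfl fun p hp => ?_
  rw [Finset.HasAntidiagonal.mem_antidiagonal] at hp
  subst hp
  rw [add_smul, smul_mul_assoc, mul_smul_comm]

lemma coeff_pow_zero {S : Type*} [CommRing S] (H : PowerSeries S)
    (hH : PowerSeries.constantCoeff H = 0) :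
    ∀ m k, k < m → PowerSeries.coeff k (H ^ m) = 0 := by
  intro m
  induction m with
  | zero => intro k hk; omega
  | succ m ih =>
    intro k hk
    rw [pow_succ, PowerSeries.coeff_mul]
    refine Finset.sum_eq_zero fun p hp => ?_
    rw [Finset.HasAntidiagonal.mem_antidiagonal] at hp
    rcases lt_or_ge p.1 m with h | h
    · rw [ih p.1 h, zero_mul]
    · have : p.2 = 0 := by omega
      rw [this, PowerSeries.coeff_zero_eq_constantCoeff, hH, mul_zero]

/-- truncated log sums -/
noncomputable def Sn (G : PowerSeries (Polynomial ℚ)) (n : ℕ) : PowerSeries (Polynomial ℚ) :=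
  ∑ m ∈ Finset.Icc 1 n, ((-1 : ℚ) ^ (m + 1) / m) • (G - 1) ^ m

lemma coeff_flog_eq_coeff_Sn (G : PowerSeries (Polynomial ℚ))
    (hG : PowerSeries.constantCoeff G = 1) {n k : ℕ} (hk : k ≤ n) :
    PowerSeries.coeff k (flog G) = PowerSeries.coeff k (Sn G n) := by
  have hH : PowerSeries.constantCoeff (G - 1) = 0 := by simp [hG]
  have : PowerSeries.coeff k (Sn G n)
      = ∑ m ∈ Finset.Icc 1 n, ((-1 : ℚ) ^ (m + 1) / m) • PowerSeries.coeff k ((G - 1) ^ m) := by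
    rw [Sn, map_sum]
    rfl
  rw [this, flog, PowerSeries.coeff_mk]
  refine Finset.sum_subset (Finset.Icc_subset_Icc_right hk) fun m hm hm' => ?_
  rw [Finset.mem_Icc] at hm
  rw [Finset.mem_Icc, not_and_or, not_le, not_le] at hm'
  have hkm : k < m := by omega
  rw [coeff_pow_zero _ hH m k hkm, smul_zero]

section Key
variable (δ : PowerSeries (Polynomial ℚ) → PowerSeries (Polynomial ℚ))
variable (hadd : ∀ A B, δ (A + B) = δ A + δ B)
variable (hsmul : ∀ (q : ℚ) A, δ (q • A) = q • δ A)
variable (hmul : ∀ A B, δ (A * B) = δ A * B + A * δ B)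
variable (hfil : ∀ A k, PowerSeries.coeff k A = 0 → PowerSeries.coeff k (δ A) = 0)

include hadd hsmul in
omit hsmul in
lemma delta_zero : δ 0 = 0 := by
  have h := hadd 0 0
  simpa using h.symm

include hadd hsmul in
lemma delta_sub (A B : PowerSeries (Polynomial ℚ)) : δ (A - B) = δ A - δ B := by
  have h1 : δ (-B) = -δ B := by
    have := hsmul (-1) B
    simpa using this
  rw [sub_eq_add_neg, hadd, h1, sub_eq_add_neg]

include hmul in
lemma delta_one : δ 1 = 0 := by
  have h := hmul 1 1
  simp only [mul_one, one_mul] at h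
  have : δ 1 = δ 1 + δ 1 := by simpa using h
  exact (left_eq_add.mp this)

include hadd hsmul in
omit hsmul in
lemma delta_sum {ι : Type*} (s : Finset ι) (f : ι → PowerSeries (Polynomial ℚ)) :
    δ (∑ i ∈ s, f i) = ∑ i ∈ s, δ (f i) := by
  classical
  induction s using Finset.cons_induction with
  | empty => simpa using delta_zero δ hadd
  | cons a s ha ih => rw [Finset.sum_cons, hadd, ih, Finset.sum_cons]

include hmul in
lemma delta_pow (H : PowerSeries (Polynomial ℚ)) :
    ∀ m : ℕ, δ (H ^ (m + 1)) = (m + 1 : ℚ) • (H ^ m * δ H) := by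
  intro m
  induction m with
  | zero => simp
  | succ m ih =>
    rw [pow_succ, hmul, ih, smul_mul_assoc]
    have h1 : H ^ m * δ H * H = H ^ (m + 1) * δ H := by ring
    rw [h1]
    push_cast
    module

include hadd hsmul hmul hfil in
lemma flog_key (G : PowerSeries (Polynomial ℚ))
    (hG : PowerSeries.constantCoeff G = 1) :
    δ (flog G) * G = δ G := by
  set H : PowerSeries (Polynomial ℚ) := G - 1 with hHdef
  have hH0 : PowerSeries.coeff 0 H = 0 := by
    simp [hHdef, PowerSeries.coeff_zero_eq_constantCoeff, hG]
  have hHc : PowerSeries.constantCoeff H = 0 := by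
    simpa [PowerSeries.coeff_zero_eq_constantCoeff] using hH0
  have hδH : δ H = δ G := by
    rw [hHdef, delta_sub δ hadd hsmul, delta_one δ hmul, sub_zero]
  refine PowerSeries.ext fun n => ?_
  -- replace flog by Sn under δ in coefficients up to n
  have step1 : PowerSeries.coeff n (δ (flog G) * G)
      = PowerSeries.coeff n (δ (Sn G n) * G) := by
    rw [PowerSeries.coeff_mul, PowerSeries.coeff_mul]
    refine Finset.sum_congr rfl fun p hp => ?_
    rw [Finset.HasAntidiagonal.mem_antidiagonal] at hp
    have hp1 : p.1 ≤ n := by omega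
    have hc : PowerSeries.coeff p.1 (flog G - Sn G n) = 0 := by
      rw [map_sub, coeff_flog_eq_coeff_Sn G hG hp1, sub_self]
    have := hfil _ p.1 hc
    rw [delta_sub δ hadd hsmul] at this
    rw [map_sub, sub_eq_zero] at this
    rw [this]
  rw [step1]
  -- compute δ (Sn G n) * G
  have hsplit : δ (Sn G n) * G
      = δ H - ((-1 : ℚ) ^ n) • (H ^ n * δ H) := by
    rw [Sn]
    rw [delta_sum δ hadd]
    have hterm : ∀ m ∈ Finset.Icc 1 n,
        δ (((-1 : ℚ) ^ (m + 1) / m) • H ^ m) * G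
          = ((-1 : ℚ) ^ (m - 1)) • (H ^ (m - 1) * δ H)
            - ((-1 : ℚ) ^ m) • (H ^ m * δ H) := by
      intro m hm
      rw [Finset.mem_Icc] at hm
      obtain ⟨i, rfl⟩ : ∃ i, m = i + 1 := ⟨m - 1, by omega⟩
      rw [hsmul, delta_pow δ hmul H i, smul_smul]
      have hG' : G = 1 + H := by rw [hHdef]; ring
      rw [hG']
      simp only [Nat.add_sub_cancel]
      have hq : (-1 : ℚ) ^ (i + 1 + 1) / ((i : ℚ) + 1) * ((i : ℚ) + 1) = (-1 : ℚ) ^ i := by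
        have hne : ((i : ℚ) + 1) ≠ 0 := by positivity
        field_simp
        ring
      push_cast
      rw [hq, smul_mul_assoc]
      have h2 : H ^ i * δ H * (1 + H) = H ^ i * δ H + H ^ (i + 1) * δ H := by ring
      have h1 : (-1 : ℚ) ^ (i + 1) = -((-1 : ℚ) ^ i) := by ring
      rw [h2, h1]
      module
    rw [Finset.sum_mul]
    rw [Finset.sum_congr rfl hterm]
    -- telescoping
    set g : ℕ → PowerSeries (Polynomial ℚ) := fun m => ((-1 : ℚ) ^ m) • (H ^ m * δ H) with hg
    have hre : ∑ m ∈ Finset.Icc 1 n, (((-1 : ℚ) ^ (m - 1)) • (H ^ (m - 1) * δ H)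
            - ((-1 : ℚ) ^ m) • (H ^ m * δ H))
        = ∑ i ∈ Finset.range n, (g i - g (i + 1)) := by
      rw [← Finset.Ico_add_one_right_eq_Icc, Finset.sum_Ico_eq_sum_range]
      have hn1 : n + 1 - 1 = n := rfl
      rw [hn1]
      refine Finset.sum_congr rfl fun i _ => ?_
      have h1 : 1 + i - 1 = i := by omega
      have h2 : 1 + i = i + 1 := by omega
      rw [h1, h2, hg]
    rw [hre, Finset.sum_range_sub']
    have hg0 : g 0 = δ H := by simp [hg]
    rw [hg0]
  rw [hsplit, map_sub]
  have hzero : PowerSeries.coeff n (H ^ n * δ H) = 0 := by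
    rw [PowerSeries.coeff_mul]
    refine Finset.sum_eq_zero fun p hp => ?_
    rw [Finset.HasAntidiagonal.mem_antidiagonal] at hp
    rcases lt_or_ge p.1 n with h | h
    · rw [coeff_pow_zero _ hHc _ _ h, zero_mul]
    · have h2 : p.2 = 0 := by omega
      rw [h2, hfil _ 0 hH0, mul_zero]
  rw [PowerSeries.coeff_smul, hzero, smul_zero, sub_zero, hδH]


end Key

lemma Dz_fil : ∀ (A : PowerSeries (Polynomial ℚ)) k,
    PowerSeries.coeff k A = 0 → PowerSeries.coeff k (Dz A) = 0 := by
  intro A k h; rw [coeff_Dz, h]; simp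

lemma Th_fil : ∀ (A : PowerSeries (Polynomial ℚ)) k,
    PowerSeries.coeff k A = 0 → PowerSeries.coeff k (Th A) = 0 := by
  intro A k h; rw [coeff_Th, h]; simp

/-- the generating function -/
def Gser : PowerSeries (Polynomial ℚ) :=
  PowerSeries.mk fun n => (n.factorial : ℚ)⁻¹ • (Polynomial.X ^ (n * (n - 1) / 2))

lemma Gser_const : PowerSeries.constantCoeff Gser = 1 := by
  rw [← PowerSeries.coeff_zero_eq_constantCoeff, Gser, PowerSeries.coeff_mk]
  norm_num

lemma key_Dz : Dz (flog Gser) * Gser = Dz Gser :=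
  flog_key Dz Dz_add Dz_smul Dz_mul Dz_fil Gser Gser_const

lemma key_Th : Th (flog Gser) * Gser = Th Gser :=
  flog_key Th Th_add Th_smul' Th_mul Th_fil Gser Gser_const

lemma nn_sub (n : ℕ) : n * (n - 1) = n * n - n := by
  cases n with
  | zero => simp
  | succ k => simp [Nat.succ_sub_one]; ring_nf; omega

lemma two_e (n : ℕ) : 2 * (n * (n - 1) / 2) = n * n - n := by
  have h : 2 ∣ n * (n - 1) := (Nat.even_mul_pred_self n).two_dvd
  rw [nn_sub] at h ⊢
  omega

lemma G_pde : (PowerSeries.C (2 * Polynomial.X)) * Dz Gser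
    = Th (Th Gser) - Th Gser := by
  refine PowerSeries.ext fun n => ?_
  rw [map_sub, PowerSeries.coeff_C_mul, coeff_Dz]
  simp only [coeff_Th]
  rw [Gser, PowerSeries.coeff_mk]
  set e := n * (n - 1) / 2 with he
  rw [Polynomial.derivative_smul, Polynomial.derivative_X_pow]
  rcases Nat.lt_or_ge n 2 with h2 | h2
  · interval_cases n <;> simp [he]
  · have he1 : 1 ≤ e := by
      have h1 := two_e n
      have h2' : 2 * n ≤ n * n := by nlinarith
      omega
    have hX : (2 * Polynomial.X) * (Polynomial.C (e : ℚ) * Polynomial.X ^ (e - 1))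
        = ((n * n - n : ℕ) : ℚ) • Polynomial.X ^ e := by
      have hpow : Polynomial.X * Polynomial.X ^ (e - 1) = (Polynomial.X ^ e : Polynomial ℚ) := by
        rw [← pow_succ']
        congr 1
        omega
      have hcast : ((n * n - n : ℕ) : ℚ) = 2 * (e : ℚ) := by
        have := two_e n
        push_cast [← this]
        ring
      rw [hcast, Polynomial.smul_eq_C_mul]
      have hre : (2 : Polynomial ℚ) * Polynomial.X * (Polynomial.C (e : ℚ) * Polynomial.X ^ (e - 1))
          = Polynomial.C (e : ℚ) * 2 * (Polynomial.X * Polynomial.X ^ (e - 1)) := by ring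
      rw [hre, hpow, map_mul]
      have hC2 : (Polynomial.C (2:ℚ)) = (2 : Polynomial ℚ) := map_ofNat Polynomial.C 2
      rw [hC2]
      ring
    rw [mul_smul_comm, hX, smul_smul]
    have hle : n ≤ n * n := by nlinarith
    rw [← Nat.cast_smul_eq_nsmul ℚ n, ← Nat.cast_smul_eq_nsmul ℚ n,
      smul_smul, smul_smul, smul_smul, ← sub_smul]
    congr 1
    rw [Nat.cast_sub hle]
    push_cast
    ring

lemma star_eq : (PowerSeries.C (2 * Polynomial.X)) * Dz (flog Gser)
    = Th (Th (flog Gser)) + Th (flog Gser) * Th (flog Gser) - Th (flog Gser) := by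
  have hGne : Gser ≠ 0 := by
    intro h
    have h2 := Gser_const
    rw [h, map_zero] at h2
    exact one_ne_zero h2.symm
  apply mul_right_cancel₀ hGne
  have h1 : Th (Th Gser) = Th (Th (flog Gser)) * Gser + Th (flog Gser) * Th Gser := by
    conv_lhs => rw [← key_Th]
    rw [Th_mul]
  calc (PowerSeries.C (2 * Polynomial.X)) * Dz (flog Gser) * Gser
      = (PowerSeries.C (2 * Polynomial.X)) * (Dz (flog Gser) * Gser) := by ring
    _ = (PowerSeries.C (2 * Polynomial.X)) * Dz Gser := by rw [key_Dz]
    _ = Th (Th Gser) - Th Gser := G_pde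
    _ = Th (Th (flog Gser)) * Gser + Th (flog Gser) * Th Gser - Th Gser := by rw [h1]
    _ = (Th (Th (flog Gser)) + Th (flog Gser) * Th (flog Gser) - Th (flog Gser)) * Gser := by
        conv_lhs => rw [← key_Th]
        ring

lemma Q_ode (n : ℕ) (hn : 2 ≤ n) :
    2 * (Polynomial.X * Polynomial.derivative
        ((n.factorial : ℚ) • PowerSeries.coeff n (flog Gser)))
      = ((n * (n - 1) : ℕ) : ℚ) • ((n.factorial : ℚ) • PowerSeries.coeff n (flog Gser)) +
        ∑ i ∈ Finset.Icc 1 (n - 1), ((i * (n - i) * n.choose i : ℕ) : ℚ) •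
          (((i.factorial : ℚ) • PowerSeries.coeff i (flog Gser)) *
            (((n - i).factorial : ℚ) • PowerSeries.coeff (n - i) (flog Gser))) := by
  set l : ℕ → Polynomial ℚ := fun k => PowerSeries.coeff k (flog Gser) with hldef
  have E : 2 * Polynomial.X * Polynomial.derivative (l n)
      = ((n : ℚ) * n) • l n
        + (∑ p ∈ Finset.HasAntidiagonal.antidiagonal n, ((p.1 : ℚ) * p.2) • (l p.1 * l p.2))
        - (n : ℚ) • l n := by
    have h := congrArg (PowerSeries.coeff n) star_eq
    rw [PowerSeries.coeff_C_mul, coeff_Dz, map_sub, map_add, PowerSeries.coeff_mul] at h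
    simp only [coeff_Th, ← Nat.cast_smul_eq_nsmul ℚ, smul_smul, smul_mul_smul_comm] at h
    exact h
  have hsum : (n.factorial : ℚ) • (∑ p ∈ Finset.HasAntidiagonal.antidiagonal n, ((p.1 : ℚ) * p.2) • (l p.1 * l p.2))
      = ∑ i ∈ Finset.Icc 1 (n - 1), ((i * (n - i) * n.choose i : ℕ) : ℚ) •
          (((i.factorial : ℚ) • l i) * (((n - i).factorial : ℚ) • l (n - i))) := by
    rw [Finset.Nat.sum_antidiagonal_eq_sum_range_succ_mk, Finset.smul_sum]
    have hterm : ∀ i ∈ Finset.range (n + 1),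
        (n.factorial : ℚ) • (((i : ℚ) * (n - i : ℕ)) • (l i * l (n - i)))
          = ((i * (n - i) * n.choose i : ℕ) : ℚ) •
              (((i.factorial : ℚ) • l i) * (((n - i).factorial : ℚ) • l (n - i))) := by
      intro i hi
      rw [Finset.mem_range] at hi
      have hin : i ≤ n := by omega
      rw [smul_mul_smul_comm, smul_smul, smul_smul]
      congr 1
      have hfact : (n.choose i * i.factorial * (n - i).factorial : ℕ) = n.factorial :=
        Nat.choose_mul_factorial_mul_factorial hin
      push_cast [← hfact]
      ring
    rw [Finset.sum_congr rfl hterm]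
    refine (Finset.sum_subset ?_ ?_).symm
    · intro i hi
      rw [Finset.mem_Icc] at hi
      rw [Finset.mem_range]
      omega
    · intro i hi hni
      rw [Finset.mem_range] at hi
      rw [Finset.mem_Icc] at hni
      have : i * (n - i) * n.choose i = 0 := by
        rcases (by omega : i = 0 ∨ i = n) with h | h <;> simp [h]
      rw [this]
      norm_num
  have hcast : (((n * (n - 1) : ℕ)) : ℚ) = (n : ℚ) * n - n := by
    rw [nn_sub n, Nat.cast_sub (by nlinarith)]
    push_cast
    ring
  rw [Polynomial.derivative_smul]
  have hlhs : 2 * (Polynomial.X * ((n.factorial : ℚ) • Polynomial.derivative (l n)))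
      = (n.factorial : ℚ) • (2 * Polynomial.X * Polynomial.derivative (l n)) := by
    rw [mul_smul_comm, mul_smul_comm, mul_assoc]
  rw [hlhs, E, smul_sub, smul_add, hsum, hcast]
  module

def ev : Polynomial ℚ →+* ℚ := Polynomial.evalRingHom 1

def Eexp : PowerSeries ℚ := PowerSeries.mk fun n => (n.factorial : ℚ)⁻¹

lemma map_Th (A : PowerSeries (Polynomial ℚ)) :
    PowerSeries.map ev (Th A) = Th (PowerSeries.map ev A) := by
  refine PowerSeries.ext fun n => ?_
  rw [PowerSeries.coeff_map, coeff_Th, coeff_Th, PowerSeries.coeff_map, map_nsmul]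

lemma map_Gser : PowerSeries.map ev Gser = Eexp := by
  refine PowerSeries.ext fun n => ?_
  rw [PowerSeries.coeff_map, Gser, Eexp, PowerSeries.coeff_mk, PowerSeries.coeff_mk]
  simp [ev]

lemma Eexp_ne : Eexp ≠ 0 := by
  intro h
  have : PowerSeries.coeff 0 Eexp = 0 := by rw [h]; simp
  rw [Eexp, PowerSeries.coeff_mk] at this
  norm_num at this

lemma Th_Eexp : Th Eexp = PowerSeries.X * Eexp := by
  refine PowerSeries.ext fun n => ?_
  rw [coeff_Th]
  cases n with
  | zero => simp [Eexp]
  | succ m =>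
    rw [PowerSeries.coeff_succ_X_mul, Eexp, PowerSeries.coeff_mk, PowerSeries.coeff_mk,
      Nat.factorial_succ]
    have h1 : ((m+1) * m.factorial : ℚ) ≠ 0 := by positivity
    rw [nsmul_eq_mul]
    push_cast at h1 ⊢
    field_simp

lemma Th_map_flog : Th (PowerSeries.map ev (flog Gser)) = PowerSeries.X := by
  have h := congrArg (PowerSeries.map ev) key_Th
  rw [map_mul, map_Th, map_Th, map_Gser] at h
  rw [Th_Eexp] at h
  exact mul_right_cancel₀ Eexp_ne h

lemma eval_one_flog (n : ℕ) (hn : 2 ≤ n) :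
    (PowerSeries.coeff n (flog Gser)).eval 1 = 0 := by
  have h := congrArg (PowerSeries.coeff n) Th_map_flog
  rw [coeff_Th, PowerSeries.coeff_map, PowerSeries.coeff_X] at h
  rw [if_neg (by omega)] at h
  have hn0 : (n : ℚ) ≠ 0 := by positivity
  have h2 : (n : ℚ) * ev (PowerSeries.coeff n (flog Gser)) = 0 := by
    rw [← h, nsmul_eq_mul]
  have := mul_eq_zero.mp h2
  simpa [ev] using this.resolve_left hn0

lemma flog_coeff_one : PowerSeries.coeff 1 (flog Gser) = 1 := by
  rw [flog, PowerSeries.coeff_mk]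
  rw [Finset.Icc_self, Finset.sum_singleton]
  rw [pow_one, map_sub]
  have h1 : PowerSeries.coeff 1 (1 : PowerSeries (Polynomial ℚ)) = 0 := by
    rw [← map_one (PowerSeries.C (R := Polynomial ℚ)), PowerSeries.coeff_C]
    norm_num
  rw [h1, sub_zero, Gser, PowerSeries.coeff_mk]
  norm_num

lemma ode_unique (h : ℕ) (d : Polynomial ℚ)
    (hode : 2 * (Polynomial.X * Polynomial.derivative d) = ((2 * h : ℕ) : ℚ) • d)
    (heval : d.eval 1 = 0) : d = 0 := by
  have hC2 : (Polynomial.C (2:ℚ)) = (2 : Polynomial ℚ) := map_ofNat Polynomial.C 2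
  have hc : ∀ k, k ≠ h → d.coeff k = 0 := by
    intro k hk
    have h1 := congrArg (fun p => Polynomial.coeff p k) hode
    rw [Polynomial.coeff_smul, ← hC2, Polynomial.coeff_C_mul] at h1
    have h2 : (2 : ℚ) * (k : ℚ) * d.coeff k = 2 * (h : ℚ) * d.coeff k := by
      cases k with
      | zero =>
        have h0 : (Polynomial.X * Polynomial.derivative d).coeff 0 = 0 := by
          rw [Polynomial.mul_coeff_zero, Polynomial.coeff_X_zero, zero_mul]
        rw [h0, mul_zero, smul_eq_mul] at h1
        push_cast at h1 ⊢
        linarith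
      | succ j =>
        rw [Polynomial.coeff_X_mul, Polynomial.coeff_derivative] at h1
        push_cast at h1 ⊢
        rw [smul_eq_mul] at h1
        linarith [h1]
    have h3 : ((2 : ℚ) * k - 2 * h) * d.coeff k = 0 := by linarith
    rcases mul_eq_zero.mp h3 with h4 | h4
    · exfalso
      have : (k : ℚ) = h := by linarith
      exact hk (by exact_mod_cast this)
    · exact h4
  have hd : d = Polynomial.C (d.coeff h) * Polynomial.X ^ h := by
    ext k
    rw [Polynomial.coeff_C_mul, Polynomial.coeff_X_pow]
    by_cases hk : k = h
    · subst hk; simp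
    · rw [hc k hk, if_neg hk, mul_zero]
  have h5 : d.coeff h = 0 := by
    rw [hd] at heval
    simpa using heval
  rw [hd, h5]
  simp

lemma P_eq (P : ℕ → Polynomial ℚ) (hP : PRec P) :
    ∀ n, 1 ≤ n → P n = (n.factorial : ℚ) • PowerSeries.coeff n (flog Gser) := by
  intro n
  induction n using Nat.strong_induction_on with
  | _ n ih =>
    intro hn
    rcases eq_or_lt_of_le hn with h1 | h1
    · rw [← h1, hP.1, flog_coeff_one]
      norm_num
    · have hn2 : 2 ≤ n := h1
      have hODE_P := hP.2.1 n hn2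
      have hODE_Q := Q_ode n hn2
      have hsum_eq : ∑ i ∈ Finset.Icc 1 (n - 1),
            ((i * (n - i) * n.choose i : ℕ) : ℚ) • (P i * P (n - i))
          = ∑ i ∈ Finset.Icc 1 (n - 1),
            ((i * (n - i) * n.choose i : ℕ) : ℚ) •
              (((i.factorial : ℚ) • PowerSeries.coeff i (flog Gser)) *
                (((n - i).factorial : ℚ) • PowerSeries.coeff (n - i) (flog Gser))) := by
        refine Finset.sum_congr rfl fun i hi => ?_
        rw [Finset.mem_Icc] at hi
        rw [ih i (by omega) (by omega), ih (n - i) (by omega) (by omega)]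
      rw [hsum_eq] at hODE_P
      set Qn : Polynomial ℚ :=
        (n.factorial : ℚ) • PowerSeries.coeff n (flog Gser) with hQn
      have hder : 2 * (Polynomial.X * Polynomial.derivative (P n - Qn))
          = ((n * (n - 1) : ℕ) : ℚ) • (P n - Qn) := by
        rw [map_sub, smul_sub]
        rw [mul_sub, mul_sub, hODE_P, hODE_Q]
        ring
      have h2e : n * (n - 1) = 2 * (n * (n - 1) / 2) := by
        rw [two_e, nn_sub]
      rw [h2e] at hder
      have heval : (P n - Qn).eval 1 = 0 := by
        rw [Polynomial.eval_sub, hP.2.2 n hn2, hQn]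
        simp only [Polynomial.eval_smul, smul_eq_mul]
        rw [eval_one_flog n hn2]
        ring
      have := ode_unique (n * (n - 1) / 2) (P n - Qn) hder heval
      have := sub_eq_zero.mp this
      rw [this]

theorem P_egf_log (P : ℕ → Polynomial ℚ) (hP : PRec P) :
    PowerSeries.mk (fun n => if n = 0 then 0 else (Nat.factorial n : ℚ)⁻¹ • P n) =
      flog (PowerSeries.mk fun n =>
        (Nat.factorial n : ℚ)⁻¹ • (Polynomial.X ^ (n * (n - 1) / 2))) := by
  have hG : (PowerSeries.mk fun n =>
      (Nat.factorial n : ℚ)⁻¹ • (Polynomial.X ^ (n * (n - 1) / 2))) = Gser := rfl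
  rw [hG]
  refine PowerSeries.ext fun n => ?_
  rw [PowerSeries.coeff_mk]
  by_cases h0 : n = 0
  · subst h0
    rw [if_pos rfl, flog, PowerSeries.coeff_mk]
    simp
  · rw [if_neg h0, P_eq P hP n (by omega), smul_smul]
    rw [inv_mul_cancel₀ (by positivity : (n.factorial : ℚ) ≠ 0), one_smul]

end
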